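/- Let g, g' be independent standard Gaussian vectors in a finite-dimensional real Hilbert space H, let u_1,…,u_M be linear operators on H, set Z_i = ⟨u_i g, u_i g'⟩ and Ẑ_i = ⟨u_i g, u_i g⟩ − E⟨u_i g, u_i g⟩. Then for every p ≥ 1: (1/2)‖ sup_{i≤M} |Ẑ_i| ‖_p ≤ ‖ sup_{i≤M} |Z_i| ‖_p ≤ ‖ sup_{i≤M} |Ẑ_i| ‖_p. -/

import Mathlib

open MeasureTheory ProbabilityTheory RealInnerProductSpace

/-- The standard Gaussian measure on the Euclidean space `ℝ^d`. -/
noncomputable def stdGaussian (d : ℕ) : Measure (EuclideanSpace ℝ (Fin d)) :=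
  (Measure.pi fun _ : Fin d => gaussianReal 0 1).map
    (MeasurableEquiv.toLp 2 (Fin d → ℝ))

open ENNReal NNReal Real

open MeasureTheory ProbabilityTheory RealInnerProductSpace ENNReal NNReal

section AuxGeneral

open ENNReal in
/-- Jensen's inequality in `ℝ≥0∞` for a probability measure. -/
lemma aux_lintegral_pow_le {α : Type*} [MeasurableSpace α] (μ : Measure α)
    [IsProbabilityMeasure μ] {f : α → ℝ≥0∞} (hf : AEMeasurable f μ) {p : ℝ} (hp : 1 ≤ p) :
    (∫⁻ a, f a ∂μ) ^ p ≤ ∫⁻ a, f a ^ p ∂μ := by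
  rcases eq_or_lt_of_le hp with hp1 | hp1
  · simp [← hp1]
  have hpq : p.HolderConjugate (Real.conjExponent p) := Real.HolderConjugate.conjExponent hp1
  have h := ENNReal.lintegral_mul_le_Lp_mul_Lq μ hpq hf (aemeasurable_const (b := (1 : ℝ≥0∞)))
  simp only [Pi.mul_apply, mul_one, ENNReal.one_rpow, lintegral_const, measure_univ, one_mul] at h
  have h2 : (∫⁻ a, f a ∂μ) ^ p ≤ ((∫⁻ a, f a ^ p ∂μ) ^ (1 / p)) ^ p :=
    ENNReal.rpow_le_rpow h (by positivity)
  rwa [← ENNReal.rpow_mul, one_div, inv_mul_cancel₀ (by positivity : p ≠ 0),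
    ENNReal.rpow_one] at h2

/-- Pushforward of a `withDensity` measure under a measurable equivalence. -/
lemma aux_map_withDensity {α β : Type*} [MeasurableSpace α] [MeasurableSpace β]
    (e : α ≃ᵐ β) (μ : Measure α) {F : α → ℝ≥0∞} (hF : Measurable F) :
    (μ.withDensity F).map e = (μ.map e).withDensity (fun y => F (e.symm y)) := by
  ext s hs
  rw [Measure.map_apply e.measurable hs, withDensity_apply _ (e.measurable hs),
    withDensity_apply _ hs]
  have h2 := setLIntegral_map (μ := μ) (f := fun y => F (e.symm y)) hs
    (hF.comp e.symm.measurable) e.measurable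
  simp only [MeasurableEquiv.symm_apply_apply] at h2
  exact h2.symm

lemma aux_one_add_sum_le_prod {ι : Type*} (s : Finset ι) (a : ι → ℝ) (ha : ∀ i, 0 ≤ a i) :
    1 + ∑ i ∈ s, a i ≤ ∏ i ∈ s, (1 + a i) := by
  classical
  induction s using Finset.induction_on with
  | empty => simp
  | insert i s hx ih =>
    rw [Finset.sum_insert hx, Finset.prod_insert hx]
    have h1 : 0 ≤ ∑ j ∈ s, a j := Finset.sum_nonneg fun j _ => ha j
    nlinarith [ha i, mul_le_mul_of_nonneg_left ih (ha i)]

/-- Coordinatewise application of a measure-preserving map preserves the product measure. -/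
lemma aux_pi_map_coord {n : ℕ} {β : Type*} [MeasurableSpace β] (μ : Measure β)
    [IsProbabilityMeasure μ] {e : β → β} (he : Measurable e) (hinv : μ.map e = μ) :
    (Measure.pi fun _ : Fin n => μ).map (fun x j => e (x j)) = Measure.pi fun _ : Fin n => μ := by
  have hm : Measurable (fun (x : Fin n → β) j => e (x j)) :=
    measurable_pi_lambda _ fun j => he.comp (measurable_pi_apply j)
  refine (Measure.pi_eq fun s hs => ?_).symm
  rw [Measure.map_apply hm (MeasurableSet.univ_pi hs)]
  have hpre : (fun (x : Fin n → β) j => e (x j)) ⁻¹' (Set.univ.pi s)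
      = Set.univ.pi (fun j => e ⁻¹' (s j)) := by
    ext x; simp [Set.mem_pi]
  rw [hpre, Measure.pi_pi]
  refine Finset.prod_congr rfl fun j _ => ?_
  rw [← Measure.map_apply he (hs j), hinv]

/-- lintegral of a product of identical single-coordinate factors over a product measure. -/
lemma aux_lintegral_pi_prod {n : ℕ} (μ : Measure ℝ) [IsProbabilityMeasure μ]
    {h : ℝ → ℝ≥0∞} (hh : Measurable h) :
    ∫⁻ x : Fin n → ℝ, (∏ j, h (x j)) ∂(Measure.pi fun _ : Fin n => μ)
      = (∫⁻ t, h t ∂μ) ^ n := by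
  induction n with
  | zero => simp
  | succ n ih =>
    have hmp := (measurePreserving_piFinSuccAbove (fun _ : Fin (n + 1) => μ) 0).symm
    rw [← hmp.lintegral_comp_emb (MeasurableEquiv.measurableEmbedding _)]
    simp_rw [MeasurableEquiv.piFinSuccAbove_symm_apply, Fin.insertNthEquiv,
      Fin.prod_univ_succ, Fin.insertNth_zero]
    simp only [Fin.zero_succAbove, cast_eq, Function.comp_def, Fin.cons_zero, Fin.cons_succ,
      Equiv.coe_fn_mk]
    rw [lintegral_prod_mul (f := h) (g := fun y : Fin n → ℝ => ∏ j, h (y j)) hh.aemeasurable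
      ((Finset.measurable_prod Finset.univ fun j _ =>
        hh.comp (measurable_pi_apply j)).aemeasurable)]
    rw [ih, pow_succ, mul_comm]

end AuxGeneral

noncomputable section AuxRot

/-- The rotation by `π/4` (with a flip) on `ℝ × ℝ`, an involution. -/
def rotFun : ℝ × ℝ → ℝ × ℝ := fun z => ((√2)⁻¹ * (z.1 + z.2), (√2)⁻¹ * (z.1 - z.2))

lemma sqrt_two_inv_sq : ((√2 : ℝ))⁻¹ ^ 2 = 2⁻¹ := by
  rw [← one_div, div_pow, one_pow, Real.sq_sqrt (by norm_num : (2:ℝ) ≥ 0).le]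
  norm_num

lemma rotFun_invol : Function.Involutive rotFun := by
  intro z
  have h2 : (√2 : ℝ) ≠ 0 := by positivity
  have hs : (√2 : ℝ) * √2 = 2 := Real.mul_self_sqrt (by norm_num)
  unfold rotFun
  ext <;> simp only <;> field_simp <;> (rw [Real.sq_sqrt (show (0:ℝ) ≤ 2 by norm_num)]; ring)

/-- `rotFun` as a linear map. -/
def rotLin : (ℝ × ℝ) →ₗ[ℝ] ℝ × ℝ where
  toFun := rotFun
  map_add' z w := by unfold rotFun; ext <;> simp <;> ring
  map_smul' c z := by unfold rotFun; ext <;> simp <;> ring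

lemma rotLin_comp_self : rotLin ∘ₗ rotLin = LinearMap.id := by
  apply LinearMap.ext
  intro z
  exact rotFun_invol z

lemma rotLin_det_ne_zero : LinearMap.det rotLin ≠ 0 := by
  intro h
  have h1 : LinearMap.det (rotLin ∘ₗ rotLin) = 1 := by
    rw [rotLin_comp_self, LinearMap.det_id]
  rw [LinearMap.det_comp, h, mul_zero] at h1
  norm_num at h1

lemma rotLin_abs_det : |LinearMap.det rotLin| = 1 := by
  have h1 : LinearMap.det rotLin * LinearMap.det rotLin = 1 := by
    rw [← LinearMap.det_comp, rotLin_comp_self, LinearMap.det_id]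
  rcases mul_self_eq_one_iff.mp h1 with h | h <;> rw [h] <;> norm_num

/-- `rotFun` as a measurable equivalence. -/
def rotEquiv : (ℝ × ℝ) ≃ᵐ (ℝ × ℝ) :=
  Homeomorph.toMeasurableEquiv
    { toFun := rotFun
      invFun := rotFun
      left_inv := rotFun_invol
      right_inv := rotFun_invol
      continuous_toFun := rotLin.continuous_of_finiteDimensional
      continuous_invFun := rotLin.continuous_of_finiteDimensional }

@[simp] lemma rotEquiv_apply (z : ℝ × ℝ) : rotEquiv z = rotFun z := rfl
@[simp] lemma rotEquiv_symm_apply (z : ℝ × ℝ) : rotEquiv.symm z = rotFun z := rfl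

lemma measurable_rotFun : Measurable rotFun := rotEquiv.measurable

lemma volume_map_rotFun : (volume : Measure (ℝ × ℝ)).map rotFun = volume := by
  have h := Measure.map_linearMap_addHaar_eq_smul_addHaar (volume : Measure (ℝ × ℝ))
    rotLin_det_ne_zero
  have habs : |(LinearMap.det rotLin)⁻¹| = 1 := by
    rw [abs_inv, rotLin_abs_det]; norm_num
  rw [habs] at h
  simp at h
  exact h

lemma gaussianPDFReal_rot (a b : ℝ) :
    gaussianPDFReal 0 1 ((√2)⁻¹ * (a + b)) * gaussianPDFReal 0 1 ((√2)⁻¹ * (a - b))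
      = gaussianPDFReal 0 1 a * gaussianPDFReal 0 1 b := by
  simp only [gaussianPDFReal, NNReal.coe_one, mul_one, sub_zero]
  rw [mul_mul_mul_comm, ← Real.exp_add, mul_mul_mul_comm, ← Real.exp_add]
  congr 1
  have h : ∀ s : ℝ, ((√2)⁻¹ * s) ^ 2 = s ^ 2 / 2 := by
    intro s
    rw [mul_pow, sqrt_two_inv_sq]; ring
  rw [h, h]; ring

lemma gaussianPDF_rot (z : ℝ × ℝ) :
    gaussianPDF 0 1 (rotFun z).1 * gaussianPDF 0 1 (rotFun z).2
      = gaussianPDF 0 1 z.1 * gaussianPDF 0 1 z.2 := by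
  simp only [gaussianPDF, rotFun]
  rw [← ENNReal.ofReal_mul (gaussianPDFReal_nonneg _ _ _),
    ← ENNReal.ofReal_mul (gaussianPDFReal_nonneg _ _ _), gaussianPDFReal_rot]

lemma gaussian2_eq_withDensity :
    (gaussianReal 0 1).prod (gaussianReal 0 1)
      = (volume : Measure (ℝ × ℝ)).withDensity
          (fun z => gaussianPDF 0 1 z.1 * gaussianPDF 0 1 z.2) := by
  have hmeas : Measurable fun z : ℝ × ℝ => gaussianPDF 0 1 z.1 * gaussianPDF 0 1 z.2 :=
    ((measurable_gaussianPDF 0 1).comp measurable_fst).mul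
      ((measurable_gaussianPDF 0 1).comp measurable_snd)
  refine Measure.prod_eq fun s t hs ht => ?_
  rw [withDensity_apply _ (hs.prod ht), Measure.volume_eq_prod, ← Measure.prod_restrict,
    lintegral_prod_mul (measurable_gaussianPDF 0 1).aemeasurable
      (measurable_gaussianPDF 0 1).aemeasurable]
  rw [gaussianReal_of_var_ne_zero 0 one_ne_zero, withDensity_apply _ hs, withDensity_apply _ ht]

/-- The 2-dimensional standard Gaussian is invariant under `rotFun`. -/
lemma gaussian2_map_rot :
    ((gaussianReal 0 1).prod (gaussianReal 0 1)).map rotFun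
      = (gaussianReal 0 1).prod (gaussianReal 0 1) := by
  have hmeas : Measurable fun z : ℝ × ℝ => gaussianPDF 0 1 z.1 * gaussianPDF 0 1 z.2 :=
    ((measurable_gaussianPDF 0 1).comp measurable_fst).mul
      ((measurable_gaussianPDF 0 1).comp measurable_snd)
  have : ((gaussianReal 0 1).prod (gaussianReal 0 1)).map rotEquiv
      = (gaussianReal 0 1).prod (gaussianReal 0 1) := by
    rw [gaussian2_eq_withDensity, aux_map_withDensity rotEquiv _ hmeas]
    have hv : (volume : Measure (ℝ × ℝ)).map rotEquiv = volume := volume_map_rotFun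
    rw [hv]
    congr 1
    funext z
    simpa using gaussianPDF_rot z
  exact this

end AuxRot


instance stdGaussian_isProbabilityMeasure (d : ℕ) : IsProbabilityMeasure (stdGaussian d) := by
  rw [_root_.stdGaussian]
  exact Measure.isProbabilityMeasure_map (MeasurableEquiv.toLp 2 (Fin d → ℝ)).measurable.aemeasurable

lemma gaussianPDFReal_zero_one (t : ℝ) :
    gaussianPDFReal 0 1 t = (√(2 * π))⁻¹ * rexp (-(2⁻¹) * t ^ 2) := by
  simp only [gaussianPDFReal, NNReal.coe_one, mul_one, sub_zero]
  ring_nf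

lemma integrable_poly_gaussian (n : ℕ) :
    Integrable (fun t : ℝ => gaussianPDFReal 0 1 t * (1 + t ^ 2) ^ n) volume := by
  have hK : (0:ℝ) ≤ (√(2 * π))⁻¹ := by positivity
  have hI1 : Integrable (fun t : ℝ => rexp (-(2⁻¹) * t ^ 2)) volume :=
    integrable_exp_neg_mul_sq (by norm_num)
  have hI2 : Integrable (fun t : ℝ => t ^ (2 * n) * rexp (-(2⁻¹) * t ^ 2)) volume := by
    have hs : (-1 : ℝ) < ((2 * n : ℕ) : ℝ) :=
      lt_of_lt_of_le neg_one_lt_zero (Nat.cast_nonneg _)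
    have h := integrable_rpow_mul_exp_neg_mul_sq (by norm_num : (0:ℝ) < 2⁻¹)
      (s := ((2 * n : ℕ) : ℝ)) hs
    have heq : (fun x : ℝ => x ^ ((2 * n : ℕ) : ℝ) * rexp (-(2⁻¹) * x ^ 2))
        = fun t : ℝ => t ^ (2 * n) * rexp (-(2⁻¹) * t ^ 2) := by
      funext x; rw [Real.rpow_natCast]
    rwa [heq] at h
  have hbint : Integrable (fun t : ℝ =>
      (√(2 * π))⁻¹ * (2 ^ n * rexp (-(2⁻¹) * t ^ 2)
        + 2 ^ n * (t ^ (2 * n) * rexp (-(2⁻¹) * t ^ 2)))) volume :=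
    (((hI1.const_mul _).add (hI2.const_mul _)).const_mul _)
  refine hbint.mono' ?_ (ae_of_all _ fun t => ?_)
  · exact ((measurable_gaussianPDFReal 0 1).mul
      (((continuous_const.add (continuous_pow 2)).pow n).measurable)).aestronglyMeasurable
  · have hnn : 0 ≤ gaussianPDFReal 0 1 t * (1 + t ^ 2) ^ n := by
      have := gaussianPDFReal_nonneg 0 1 t; positivity
    rw [Real.norm_eq_abs, abs_of_nonneg hnn, gaussianPDFReal_zero_one]
    have hb : (1 + t ^ 2) ^ n ≤ 2 ^ n + 2 ^ n * (t ^ 2) ^ n := by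
      have h1 : (1 + t ^ 2) ^ n ≤ (2 * max 1 (t ^ 2)) ^ n := by
        apply pow_le_pow_left₀ (by positivity)
        rcases le_total 1 (t ^ 2) with h | h
        · rw [max_eq_right h]; nlinarith
        · rw [max_eq_left h]; nlinarith
      have h2 : (2 * max 1 (t ^ 2)) ^ n = 2 ^ n * (max 1 (t ^ 2)) ^ n := by rw [mul_pow]
      have h3 : (max 1 (t ^ 2)) ^ n ≤ 1 + (t ^ 2) ^ n := by
        rcases le_total 1 (t ^ 2) with h | h
        · rw [max_eq_right h]; nlinarith [pow_nonneg (sq_nonneg t) n]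
        · rw [max_eq_left h, one_pow]; nlinarith [pow_nonneg (sq_nonneg t) n]
      calc (1 + t ^ 2) ^ n ≤ 2 ^ n * (max 1 (t ^ 2)) ^ n := by rw [← h2]; exact h1
        _ ≤ 2 ^ n * (1 + (t ^ 2) ^ n) := by
            apply mul_le_mul_of_nonneg_left h3 (by positivity)
        _ = 2 ^ n + 2 ^ n * (t ^ 2) ^ n := by ring
    have hexp : (0:ℝ) ≤ rexp (-(2⁻¹) * t ^ 2) := (Real.exp_pos _).le
    calc (√(2 * π))⁻¹ * rexp (-(2⁻¹) * t ^ 2) * (1 + t ^ 2) ^ n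
        ≤ (√(2 * π))⁻¹ * rexp (-(2⁻¹) * t ^ 2) * (2 ^ n + 2 ^ n * (t ^ 2) ^ n) := by
          apply mul_le_mul_of_nonneg_left hb (by positivity)
      _ = (√(2 * π))⁻¹ * (2 ^ n * rexp (-(2⁻¹) * t ^ 2)
            + 2 ^ n * (t ^ (2 * n) * rexp (-(2⁻¹) * t ^ 2))) := by
          rw [pow_mul]; ring

lemma moment1d (n : ℕ) :
    ∫⁻ t : ℝ, ENNReal.ofReal ((1 + t ^ 2) ^ n) ∂(gaussianReal 0 1) < ⊤ := by
  have hpm : Measurable fun t : ℝ => ENNReal.ofReal ((1 + t ^ 2) ^ n) :=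
    ((continuous_const.add (continuous_pow 2)).pow n).measurable.ennreal_ofReal
  rw [gaussianReal_of_var_ne_zero 0 one_ne_zero,
    lintegral_withDensity_eq_lintegral_mul _ (measurable_gaussianPDF 0 1) hpm]
  have heq : ∀ t : ℝ, (gaussianPDF 0 1 * fun t => ENNReal.ofReal ((1 + t ^ 2) ^ n)) t
      = ENNReal.ofReal (gaussianPDFReal 0 1 t * (1 + t ^ 2) ^ n) := by
    intro t
    simp only [Pi.mul_apply, gaussianPDF]
    rw [← ENNReal.ofReal_mul (gaussianPDFReal_nonneg 0 1 t)]
  simp_rw [heq]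
  exact (integrable_poly_gaussian n).lintegral_lt_top

lemma stdGaussian_moment (d n : ℕ) :
    ∫⁻ x, ENNReal.ofReal ((1 + ‖x‖ ^ 2) ^ n) ∂(stdGaussian d) < ⊤ := by
  have hpm : Measurable fun x : EuclideanSpace ℝ (Fin d) =>
      ENNReal.ofReal ((1 + ‖x‖ ^ 2) ^ n) :=
    ((continuous_const.add ((continuous_norm).pow 2)).pow n).measurable.ennreal_ofReal
  rw [_root_.stdGaussian, lintegral_map hpm (MeasurableEquiv.toLp 2 (Fin d → ℝ)).measurable]
  have hnorm : ∀ y : Fin d → ℝ,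
      ‖((MeasurableEquiv.toLp 2 (Fin d → ℝ)) y)‖ ^ 2 = ∑ j, (y j) ^ 2 := by
    intro y
    rw [EuclideanSpace.norm_eq, Real.sq_sqrt (by positivity)]
    refine Finset.sum_congr rfl fun j _ => ?_
    rw [Real.norm_eq_abs, sq_abs]
    rfl
  have hbd : ∀ y : Fin d → ℝ, ENNReal.ofReal ((1 + ∑ j, (y j) ^ 2) ^ n)
      ≤ ∏ j : Fin d, ENNReal.ofReal ((1 + (y j) ^ 2) ^ n) := by
    intro y
    rw [← ENNReal.ofReal_prod_of_nonneg (fun j _ => by positivity)]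
    apply ENNReal.ofReal_le_ofReal
    calc (1 + ∑ j, (y j) ^ 2) ^ n ≤ (∏ j : Fin d, (1 + (y j) ^ 2)) ^ n := by
          apply pow_le_pow_left₀ (by positivity)
          exact aux_one_add_sum_le_prod Finset.univ (fun j => (y j) ^ 2) (fun j => sq_nonneg _)
      _ = ∏ j : Fin d, (1 + (y j) ^ 2) ^ n := (Finset.prod_pow _ _ _).symm
  calc ∫⁻ y, ENNReal.ofReal ((1 + ‖((MeasurableEquiv.toLp 2 (Fin d → ℝ)) y)‖ ^ 2) ^ n)
          ∂(Measure.pi fun _ : Fin d => gaussianReal 0 1)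
      ≤ ∫⁻ y, ∏ j : Fin d, ENNReal.ofReal ((1 + (y j) ^ 2) ^ n)
          ∂(Measure.pi fun _ : Fin d => gaussianReal 0 1) := by
        apply lintegral_mono
        intro y
        dsimp only
        rw [hnorm y]
        exact hbd y
    _ = (∫⁻ t : ℝ, ENNReal.ofReal ((1 + t ^ 2) ^ n) ∂(gaussianReal 0 1)) ^ d :=
        aux_lintegral_pi_prod (gaussianReal 0 1)
          ((continuous_const.add (continuous_pow 2)).pow n).measurable.ennreal_ofReal
    _ < ⊤ := ENNReal.pow_lt_top (moment1d n)
/-- Rotation on the product Euclidean space. -/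
noncomputable def rotE (d : ℕ) :
    EuclideanSpace ℝ (Fin d) × EuclideanSpace ℝ (Fin d) →
      EuclideanSpace ℝ (Fin d) × EuclideanSpace ℝ (Fin d) :=
  fun z => ((√2)⁻¹ • (z.1 + z.2), (√2)⁻¹ • (z.1 - z.2))

lemma rotE_continuous (d : ℕ) : Continuous (rotE d) :=
  by unfold rotE; exact (((continuous_fst.add continuous_snd).const_smul ((√2)⁻¹ : ℝ)).prodMk
    ((continuous_fst.sub continuous_snd).const_smul ((√2)⁻¹ : ℝ)))

lemma stdGaussian_prod_map_rotE (d : ℕ) :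
    ((stdGaussian d).prod (stdGaussian d)).map (rotE d) = (stdGaussian d).prod (stdGaussian d) := by
  set γ := gaussianReal 0 1 with hγ
  set piG := Measure.pi fun _ : Fin d => γ with hpiG
  set piR := Measure.pi fun _ : Fin d => γ.prod γ with hpiR
  set es := (MeasurableEquiv.toLp 2 (Fin d → ℝ)) with hes
  set Φ := MeasurableEquiv.arrowProdEquivProdArrow ℝ ℝ (Fin d) with hΦ
  have h1 : (stdGaussian d).prod (stdGaussian d) = (piG.prod piG).map (Prod.map es es) := by
    rw [_root_.stdGaussian]
    exact Measure.map_prod_map _ _ es.measurable es.measurable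
  have h2 : piG.prod piG = piR.map Φ :=
    (measurePreserving_arrowProdEquivProdArrow ℝ ℝ (Fin d) (fun _ => γ) (fun _ => γ)).map_eq.symm
  have hrot : piR.map (fun x j => rotFun (x j)) = piR := by
    apply aux_pi_map_coord (γ.prod γ) (measurable_rotFun)
    exact gaussian2_map_rot
  have hcomm : (rotE d) ∘ (Prod.map es es ∘ Φ) = (Prod.map es es ∘ Φ) ∘ (fun x j => rotFun (x j)) := by
    funext x
    rfl
  have hmes : Measurable (Prod.map (⇑es) (⇑es)) := es.measurable.prodMap es.measurable
  have hrotm : Measurable (rotE d) := (rotE_continuous d).measurable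
  have hcoord : Measurable (fun (x : Fin d → ℝ × ℝ) j => rotFun (x j)) :=
    measurable_pi_lambda _ fun j => measurable_rotFun.comp (measurable_pi_apply j)
  calc ((stdGaussian d).prod (stdGaussian d)).map (rotE d)
      = ((piR.map Φ).map (Prod.map es es)).map (rotE d) := by rw [h1, h2]
    _ = piR.map ((rotE d) ∘ (Prod.map es es ∘ Φ)) := by
        rw [Measure.map_map hmes Φ.measurable, Measure.map_map hrotm (hmes.comp Φ.measurable)]
    _ = piR.map ((Prod.map es es ∘ Φ) ∘ (fun x j => rotFun (x j))) := by rw [hcomm]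
    _ = ((piR.map (fun x j => rotFun (x j))).map Φ).map (Prod.map es es) := by
        rw [Measure.map_map Φ.measurable hcoord,
          Measure.map_map hmes (Φ.measurable.comp hcoord), Function.comp_assoc]
    _ = (stdGaussian d).prod (stdGaussian d) := by rw [hrot, ← h2, ← h1]


set_option maxHeartbeats 1000000 in
set_option synthInstance.maxHeartbeats 400000 in
/-- With `Z_i = ⟨u_i g, u_i g'⟩` and `Ẑ_i = ⟨u_i g, u_i g⟩ − E⟨u_i g, u_i g⟩`,
for every `p ≥ 1`:
`(1/2)‖sup_i |Ẑ_i|‖_p ≤ ‖sup_i |Z_i|‖_p ≤ ‖sup_i |Ẑ_i|‖_p`. -/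
theorem stmt2 {d : ℕ} {Ω : Type*} [MeasurableSpace Ω] (P : Measure Ω)
    [IsProbabilityMeasure P] (g g' : Ω → EuclideanSpace ℝ (Fin d))
    (hgm : Measurable g) (hg'm : Measurable g')
    (hg : Measure.map g P = stdGaussian d) (hg' : Measure.map g' P = stdGaussian d)
    (hindep : IndepFun g g' P)
    (M : ℕ) (hM : 0 < M)
    (u : Fin M → (EuclideanSpace ℝ (Fin d) →ₗ[ℝ] EuclideanSpace ℝ (Fin d)))
    (Z Zhat : Fin M → Ω → ℝ)
    (hZ : ∀ i ω, Z i ω = ⟪u i (g ω), u i (g' ω)⟫)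
    (hZhat : ∀ i ω, Zhat i ω =
      ⟪u i (g ω), u i (g ω)⟫ - ∫ ω', ⟪u i (g ω'), u i (g ω')⟫ ∂P)
    (p : ℝ) (hp : 1 ≤ p) :
    (1 / 2) * (∫ ω, (⨆ i, |Zhat i ω|) ^ p ∂P) ^ (1 / p) ≤
        (∫ ω, (⨆ i, |Z i ω|) ^ p ∂P) ^ (1 / p) ∧
      (∫ ω, (⨆ i, |Z i ω|) ^ p ∂P) ^ (1 / p) ≤
        (∫ ω, (⨆ i, |Zhat i ω|) ^ p ∂P) ^ (1 / p) := by
  classical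
  haveI : Nonempty (Fin M) := ⟨⟨0, hM⟩⟩
  have hp0 : (0:ℝ) < p := lt_of_lt_of_le one_pos hp
  have h1p : (0:ℝ) ≤ 1 / p := by positivity
  set μ := stdGaussian d with hμdef
  set ν := μ.prod μ with hνdef
  have hucont : ∀ i, Continuous (u i) := fun i => (u i).continuous_of_finiteDimensional
  set q : Fin M → EuclideanSpace ℝ (Fin d) → ℝ := fun i x => ⟪u i x, u i x⟫ with hqdef
  have hqcont : ∀ i, Continuous (q i) := fun i => (hucont i).inner (hucont i)
  set m : Fin M → ℝ := fun i => ∫ x, q i x ∂μ with hmdef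
  set f : Fin M → EuclideanSpace ℝ (Fin d) → ℝ := fun i x => q i x - m i with hfdef
  have hfcont : ∀ i, Continuous (f i) := fun i => (hqcont i).sub continuous_const
  set G : EuclideanSpace ℝ (Fin d) → ℝ := fun x => ⨆ i, |f i x| with hGdef
  set H : EuclideanSpace ℝ (Fin d) × EuclideanSpace ℝ (Fin d) → ℝ :=
    fun z => ⨆ i, |f i z.1 - f i z.2| with hHdef
  set F : EuclideanSpace ℝ (Fin d) × EuclideanSpace ℝ (Fin d) → ℝ :=
    fun z => ⨆ i, |⟪u i z.1, u i z.2⟫| with hFdef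
  have hGmeas : Measurable G := Measurable.iSup fun i => ((hfcont i).measurable).abs
  have hHmeas : Measurable H := Measurable.iSup fun i =>
    (((hfcont i).comp continuous_fst).sub ((hfcont i).comp continuous_snd)).measurable.abs
  have hFmeas : Measurable F := Measurable.iSup fun i =>
    (((hucont i).comp continuous_fst).inner ((hucont i).comp continuous_snd)).measurable.abs
  have hbdd : ∀ (h : Fin M → ℝ), BddAbove (Set.range h) := fun h => (Set.finite_range h).bddAbove
  have hGnn : ∀ x, 0 ≤ G x := by
    intro x
    simp only [hGdef]
    exact le_trans (abs_nonneg (f ⟨0, hM⟩ x)) (le_ciSup (f := fun j => |f j x|) (hbdd _) (⟨0, hM⟩ : Fin M))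
  have hHnn : ∀ z, 0 ≤ H z := by
    intro z
    simp only [hHdef]
    exact le_trans (abs_nonneg (f ⟨0, hM⟩ z.1 - f ⟨0, hM⟩ z.2)) (le_ciSup (f := fun j => |f j z.1 - f j z.2|) (hbdd _) (⟨0, hM⟩ : Fin M))
  have hFnn : ∀ z, 0 ≤ F z := by
    intro z
    simp only [hFdef]
    exact le_trans (abs_nonneg (⟪u ⟨0, hM⟩ z.1, u ⟨0, hM⟩ z.2⟫)) (le_ciSup (f := fun j => |⟪u j z.1, u j z.2⟫|) (hbdd _) (⟨0, hM⟩ : Fin M))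
  -- integrability over μ
  have hint1 : Integrable (fun x : EuclideanSpace ℝ (Fin d) => 1 + ‖x‖ ^ 2) μ := by
    refine ⟨(continuous_const.add (continuous_norm.pow 2)).measurable.aestronglyMeasurable, ?_⟩
    rw [hasFiniteIntegral_iff_ofReal (ae_of_all _ fun x => by positivity)]
    simpa using stdGaussian_moment d 1
  set c : Fin M → ℝ := fun i => ‖LinearMap.toContinuousLinearMap (u i)‖ with hcdef
  have hqle : ∀ i x, |q i x| ≤ c i ^ 2 * (1 + ‖x‖ ^ 2) := by
    intro i x
    have h1 : q i x = ‖u i x‖ ^ 2 := real_inner_self_eq_norm_sq _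
    have h2 : ‖u i x‖ ≤ c i * ‖x‖ := by
      have := (LinearMap.toContinuousLinearMap (u i)).le_opNorm x
      simpa using this
    rw [h1, abs_of_nonneg (sq_nonneg _)]
    nlinarith [norm_nonneg (u i x), norm_nonneg x, sq_nonneg (c i), sq_nonneg ‖x‖]
  have hq_int : ∀ i, Integrable (q i) μ := fun i =>
    (hint1.const_mul (c i ^ 2)).mono' (hqcont i).measurable.aestronglyMeasurable
      (ae_of_all _ fun x => by rw [Real.norm_eq_abs]; exact hqle i x)
  have hf_int : ∀ i, Integrable (f i) μ := fun i => (hq_int i).sub (integrable_const _)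
  have hf_mean : ∀ i, ∫ x, f i x ∂μ = 0 := by
    intro i
    have : ∫ x, f i x ∂μ = (∫ x, q i x ∂μ) - m i := by
      rw [hfdef]
      simp only
      rw [integral_sub (hq_int i) (integrable_const _), integral_const]
      simp
    rw [this, hmdef]
    simp
  have hG_le_sum : ∀ x, G x ≤ ∑ i, |f i x| := by
    intro x
    simp only [hGdef]
    exact ciSup_le fun i => Finset.single_le_sum (fun j _ => abs_nonneg (f j x)) (Finset.mem_univ i)
  have hG_int : Integrable G μ :=
    (integrable_finset_sum Finset.univ fun i _ => (hf_int i).abs).mono'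
      hGmeas.aestronglyMeasurable
      (ae_of_all _ fun x => by
        rw [Real.norm_eq_abs, abs_of_nonneg (hGnn x)]; exact hG_le_sum x)
  have hH_le : ∀ z, H z ≤ G z.1 + G z.2 := by
    intro z
    simp only [hHdef, hGdef]
    exact ciSup_le fun i => (abs_sub (f i z.1) (f i z.2)).trans
      (add_le_add (le_ciSup (hbdd fun j => |f j z.1|) i) (le_ciSup (hbdd fun j => |f j z.2|) i))
  set C : ℝ := ∑ i, (c i ^ 2 + |m i|) with hCdef
  have hC0 : 0 ≤ C := Finset.sum_nonneg fun i _ => by positivity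
  have hfb : ∀ i x, |f i x| ≤ (c i ^ 2 + |m i|) * (1 + ‖x‖ ^ 2) := by
    intro i x
    have h1 := hqle i x
    have h2 : |f i x| ≤ |q i x| + |m i| := abs_sub (q i x) (m i)
    nlinarith [abs_nonneg (m i), sq_nonneg ‖x‖]
  have hGb : ∀ x, G x ≤ C * (1 + ‖x‖ ^ 2) := by
    intro x
    simp only [hGdef]
    refine ciSup_le fun i => (hfb i x).trans ?_
    apply mul_le_mul_of_nonneg_right _ (by positivity)
    simp only [hCdef]
    exact Finset.single_le_sum (f := fun j => c j ^ 2 + |m j|) (fun j _ => by positivity)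
      (Finset.mem_univ i)
  -- the rotation identity
  have hFT : ∀ z, F (rotE d z) = 2⁻¹ * H z := by
    intro z
    rw [hFdef, hHdef]
    simp only
    rw [Real.mul_iSup_of_nonneg (by norm_num)]
    refine iSup_congr fun i => ?_
    have hexp : ⟪u i z.1 + u i z.2, u i z.1 - u i z.2⟫
        = q i z.1 - q i z.2 := by
      rw [inner_sub_right, inner_add_left, inner_add_left,
        real_inner_comm (u i z.2) (u i z.1)]
      rw [hqdef]
      simp only
      ring
    have hkey : ⟪u i (rotE d z).1, u i (rotE d z).2⟫ = 2⁻¹ * (f i z.1 - f i z.2) := by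
      show ⟪u i ((√2)⁻¹ • (z.1 + z.2)), u i ((√2)⁻¹ • (z.1 - z.2))⟫ = _
      rw [LinearMap.map_smul, LinearMap.map_smul, real_inner_smul_left, real_inner_smul_right,
        LinearMap.map_add, LinearMap.map_sub, hexp]
      have hff : f i z.1 - f i z.2 = q i z.1 - q i z.2 := by
        rw [hfdef]; simp only; ring
      rw [hff, ← mul_assoc, ← pow_two, sqrt_two_inv_sq]
    rw [hkey, abs_mul, abs_of_nonneg (by norm_num : (0:ℝ) ≤ 2⁻¹)]
  -- laws
  have hνrot : ν.map (rotE d) = ν := stdGaussian_prod_map_rotE d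
  have hpair : Measure.map (fun ω => (g ω, g' ω)) P = ν := by
    have h := (indepFun_iff_map_prod_eq_prod_map_map hgm.aemeasurable hg'm.aemeasurable).mp hindep
    rw [hg, hg'] at h
    rw [hνdef]
    exact h
  have hm_eq : ∀ i, (∫ ω', ⟪u i (g ω'), u i (g ω')⟫ ∂P) = m i := by
    intro i
    rw [hmdef]
    simp only
    rw [← hg, integral_map hgm.aemeasurable (hqcont i).aestronglyMeasurable]
  have hZeq : ∀ ω, (⨆ i, |Z i ω|) = F (g ω, g' ω) := by
    intro ω
    rw [hFdef]
    exact iSup_congr fun i => by rw [hZ]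
  have hZhateq : ∀ ω, (⨆ i, |Zhat i ω|) = G (g ω) := by
    intro ω
    rw [hGdef]
    refine iSup_congr fun i => ?_
    rw [hZhat, hm_eq]
  have hFp_meas : Measurable fun z => F z ^ p :=
    (Real.continuous_rpow_const hp0.le).measurable.comp hFmeas
  have hGp_meas : Measurable fun x => G x ^ p :=
    (Real.continuous_rpow_const hp0.le).measurable.comp hGmeas
  have hHp_meas : Measurable fun z => H z ^ p :=
    (Real.continuous_rpow_const hp0.le).measurable.comp hHmeas
  have hLHS : ∫ ω, (⨆ i, |Z i ω|) ^ p ∂P = ∫ z, F z ^ p ∂ν := by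
    rw [← hpair, integral_map (hgm.prodMk hg'm).aemeasurable hFp_meas.aestronglyMeasurable]
    exact integral_congr_ae (ae_of_all _ fun ω => by simp only; rw [hZeq ω])
  have hRHS : ∫ ω, (⨆ i, |Zhat i ω|) ^ p ∂P = ∫ x, G x ^ p ∂μ := by
    rw [← hg, integral_map hgm.aemeasurable hGp_meas.aestronglyMeasurable]
    exact integral_congr_ae (ae_of_all _ fun ω => by simp only; rw [hZhateq ω])
  -- pass to lintegrals
  set AF := ∫⁻ z, ENNReal.ofReal (F z ^ p) ∂ν with hAFdef
  set AG := ∫⁻ x, ENNReal.ofReal (G x ^ p) ∂μ with hAGdef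
  set AH := ∫⁻ z, ENNReal.ofReal (H z ^ p) ∂ν with hAHdef
  have hFrepr : ∫ z, F z ^ p ∂ν = AF.toReal :=
    integral_eq_lintegral_of_nonneg_ae (ae_of_all _ fun z => Real.rpow_nonneg (hFnn z) p)
      hFp_meas.aestronglyMeasurable
  have hGrepr : ∫ x, G x ^ p ∂μ = AG.toReal :=
    integral_eq_lintegral_of_nonneg_ae (ae_of_all _ fun x => Real.rpow_nonneg (hGnn x) p)
      hGp_meas.aestronglyMeasurable
  -- E1 : AF = (1/2)^p * AH
  have hAF2 : ∫⁻ z, ENNReal.ofReal (F (rotE d z) ^ p) ∂ν = AF := by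
    rw [hAFdef, ← lintegral_map hFp_meas.ennreal_ofReal (rotE_continuous d).measurable, hνrot]
  have hE1 : AF = ENNReal.ofReal (2⁻¹ ^ p) * AH := by
    rw [← hAF2, hAHdef, ← lintegral_const_mul _ hHp_meas.ennreal_ofReal]
    refine lintegral_congr fun z => ?_
    rw [hFT z, Real.mul_rpow (by norm_num) (hHnn z), ENNReal.ofReal_mul (by positivity)]
  -- marginals
  have hmarg1 : ∫⁻ z, ENNReal.ofReal (G z.1 ^ p) ∂ν = AG := by
    rw [hνdef, lintegral_prod (fun z => ENNReal.ofReal (G z.1 ^ p))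
      ((hGp_meas.comp measurable_fst).ennreal_ofReal).aemeasurable]
    simp [lintegral_const, measure_univ, mul_one]
    rfl
  have hmarg2 : ∫⁻ z, ENNReal.ofReal (G z.2 ^ p) ∂ν = AG := by
    rw [hνdef, lintegral_prod (fun z => ENNReal.ofReal (G z.2 ^ p))
      ((hGp_meas.comp measurable_snd).ennreal_ofReal).aemeasurable]
    simp [lintegral_const, measure_univ, mul_one]
    rfl
  -- E2 : Minkowski
  have hE2 : AH ^ (1/p) ≤ AG ^ (1/p) + AG ^ (1/p) := by
    set φ1 : EuclideanSpace ℝ (Fin d) × EuclideanSpace ℝ (Fin d) → ℝ≥0∞ :=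
      fun z => ENNReal.ofReal (G z.1) with hφ1
    set φ2 : EuclideanSpace ℝ (Fin d) × EuclideanSpace ℝ (Fin d) → ℝ≥0∞ :=
      fun z => ENNReal.ofReal (G z.2) with hφ2
    have hmf : AEMeasurable φ1 ν :=
      ((hGmeas.comp measurable_fst).ennreal_ofReal).aemeasurable
    have hmg : AEMeasurable φ2 ν :=
      ((hGmeas.comp measurable_snd).ennreal_ofReal).aemeasurable
    have step1 : AH ≤ ∫⁻ z, (φ1 + φ2) z ^ p ∂ν := by
      rw [hAHdef]
      refine lintegral_mono fun z => ?_
      simp only [Pi.add_apply, hφ1, hφ2]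
      rw [← ENNReal.ofReal_rpow_of_nonneg (hHnn z) hp0.le]
      refine ENNReal.rpow_le_rpow ?_ hp0.le
      rw [← ENNReal.ofReal_add (hGnn _) (hGnn _)]
      exact ENNReal.ofReal_le_ofReal (hH_le z)
    have step2 := ENNReal.lintegral_Lp_add_le hmf hmg hp (μ := ν)
    have step3 : ∫⁻ z, φ1 z ^ p ∂ν = AG := by
      rw [← hmarg1]
      exact lintegral_congr fun z => ENNReal.ofReal_rpow_of_nonneg (hGnn _) hp0.le
    have step4 : ∫⁻ z, φ2 z ^ p ∂ν = AG := by
      rw [← hmarg2]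
      exact lintegral_congr fun z => ENNReal.ofReal_rpow_of_nonneg (hGnn _) hp0.le
    calc AH ^ (1/p) ≤ (∫⁻ z, (φ1 + φ2) z ^ p ∂ν) ^ (1/p) :=
        ENNReal.rpow_le_rpow step1 h1p
      _ ≤ (∫⁻ z, φ1 z ^ p ∂ν) ^ (1/p) + (∫⁻ z, φ2 z ^ p ∂ν) ^ (1/p) := step2
      _ = AG ^ (1/p) + AG ^ (1/p) := by rw [step3, step4]
  -- E3 : Jensen
  have hkey : ∀ x, ENNReal.ofReal (G x ^ p) ≤ ∫⁻ y, ENNReal.ofReal (H (x, y) ^ p) ∂μ := by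
    intro x
    have hHx_meas : Measurable fun y => H (x, y) :=
      hHmeas.comp (measurable_const.prodMk measurable_id)
    have hHx_int : Integrable (fun y => H (x, y)) μ :=
      ((integrable_const (G x)).add hG_int).mono' hHx_meas.aestronglyMeasurable
        (ae_of_all _ fun y => by
          rw [Real.norm_eq_abs, abs_of_nonneg (hHnn _)]; exact hH_le (x, y))
    have hGx : G x ≤ ∫ y, H (x, y) ∂μ := by
      simp only [hGdef]
      refine ciSup_le fun i => ?_
      have h0 : ∫ y, (f i x - f i y) ∂μ = f i x := by
        rw [integral_sub (integrable_const _) (hf_int i), hf_mean i, integral_const]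
        simp
      calc |f i x| = |∫ y, (f i x - f i y) ∂μ| := by rw [h0]
        _ ≤ ∫ y, |f i x - f i y| ∂μ := by
            simpa [Real.norm_eq_abs] using
              norm_integral_le_integral_norm (f := fun y => f i x - f i y) (μ := μ)
        _ ≤ ∫ y, H (x, y) ∂μ := by
            refine integral_mono ((integrable_const _).sub (hf_int i)).abs hHx_int fun y => ?_
            simp only [hHdef]
            exact le_ciSup (hbdd fun j => |f j x - f j y|) i
    have hA : ∫⁻ y, ENNReal.ofReal (H (x, y)) ∂μ < ⊤ := hHx_int.lintegral_lt_top
    have hArepr : ∫ y, H (x, y) ∂μ = (∫⁻ y, ENNReal.ofReal (H (x, y)) ∂μ).toReal :=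
      integral_eq_lintegral_of_nonneg_ae (ae_of_all _ fun y => hHnn _)
        hHx_meas.aestronglyMeasurable
    calc ENNReal.ofReal (G x ^ p)
        ≤ ENNReal.ofReal ((∫ y, H (x, y) ∂μ) ^ p) :=
          ENNReal.ofReal_le_ofReal (Real.rpow_le_rpow (hGnn x) hGx hp0.le)
      _ = (∫⁻ y, ENNReal.ofReal (H (x, y)) ∂μ) ^ p := by
          rw [hArepr, ← ENNReal.ofReal_rpow_of_nonneg ENNReal.toReal_nonneg hp0.le,
            ENNReal.ofReal_toReal hA.ne]
      _ ≤ ∫⁻ y, (ENNReal.ofReal (H (x, y))) ^ p ∂μ :=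
          aux_lintegral_pow_le μ hHx_meas.ennreal_ofReal.aemeasurable hp
      _ = ∫⁻ y, ENNReal.ofReal (H (x, y) ^ p) ∂μ :=
          lintegral_congr fun y => ENNReal.ofReal_rpow_of_nonneg (hHnn _) hp0.le
  have hE3 : AG ≤ AH := by
    rw [hAHdef, hνdef, lintegral_prod _ hHp_meas.ennreal_ofReal.aemeasurable]
    exact lintegral_mono fun x => hkey x
  -- finiteness of AG
  have hAGfin : AG ≠ ⊤ := by
    set n := ⌈p⌉₊ with hn
    have hCp : ∀ x, G x ^ p ≤ (C + 1) ^ p * (1 + ‖x‖ ^ 2) ^ n := by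
      intro x
      have h1 : G x ≤ (C + 1) * (1 + ‖x‖ ^ 2) := by nlinarith [hGb x, sq_nonneg ‖x‖]
      calc G x ^ p ≤ ((C + 1) * (1 + ‖x‖ ^ 2)) ^ p :=
          Real.rpow_le_rpow (hGnn x) h1 hp0.le
        _ = (C + 1) ^ p * (1 + ‖x‖ ^ 2) ^ p := Real.mul_rpow (by linarith) (by positivity)
        _ ≤ (C + 1) ^ p * (1 + ‖x‖ ^ 2) ^ (n : ℝ) := by
            apply mul_le_mul_of_nonneg_left _ (Real.rpow_nonneg (by linarith) p)
            exact Real.rpow_le_rpow_of_exponent_le (by nlinarith [sq_nonneg ‖x‖]) (Nat.le_ceil p)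
        _ = (C + 1) ^ p * (1 + ‖x‖ ^ 2) ^ n := by rw [Real.rpow_natCast]
    have hmono : AG ≤ ∫⁻ x, ENNReal.ofReal ((C + 1) ^ p * (1 + ‖x‖ ^ 2) ^ n) ∂μ := by
      rw [hAGdef]
      exact lintegral_mono fun x => ENNReal.ofReal_le_ofReal (hCp x)
    have heq2 : ∫⁻ x, ENNReal.ofReal ((C + 1) ^ p * (1 + ‖x‖ ^ 2) ^ n) ∂μ
        = ENNReal.ofReal ((C + 1) ^ p) * ∫⁻ x, ENNReal.ofReal ((1 + ‖x‖ ^ 2) ^ n) ∂μ := by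
      rw [← lintegral_const_mul _ (f := fun x : EuclideanSpace ℝ (Fin d) => ENNReal.ofReal ((1 + ‖x‖ ^ 2) ^ n))
        ((continuous_const.add (continuous_norm.pow 2)).pow n).measurable.ennreal_ofReal]
      exact lintegral_congr fun x => by rw [← ENNReal.ofReal_mul (by positivity)]
    refine ne_of_lt (lt_of_le_of_lt (hmono.trans heq2.le) ?_)
    exact ENNReal.mul_lt_top ENNReal.ofReal_lt_top (stdGaussian_moment d n)
  -- assembling
  have hhalf : (ENNReal.ofReal (2⁻¹ ^ p)) ^ (1/p) = ENNReal.ofReal 2⁻¹ := by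
    rw [← ENNReal.ofReal_rpow_of_nonneg (by norm_num : (0:ℝ) ≤ 2⁻¹) hp0.le,
      ← ENNReal.rpow_mul, mul_one_div_cancel hp0.ne', ENNReal.rpow_one]
  have hhalf2 : (2:ℝ≥0∞) * ENNReal.ofReal 2⁻¹ = 1 := by
    rw [show (2:ℝ≥0∞) = ENNReal.ofReal 2 by norm_num, ← ENNReal.ofReal_mul (by norm_num)]
    norm_num
  have h1 : AF ^ (1/p) = ENNReal.ofReal 2⁻¹ * AH ^ (1/p) := by
    rw [hE1, ENNReal.mul_rpow_of_nonneg _ _ h1p, hhalf]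
  have hupper : AF ^ (1/p) ≤ AG ^ (1/p) := by
    calc AF ^ (1/p) = ENNReal.ofReal 2⁻¹ * AH ^ (1/p) := h1
      _ ≤ ENNReal.ofReal 2⁻¹ * (AG ^ (1/p) + AG ^ (1/p)) := mul_le_mul_right hE2 _
      _ = AG ^ (1/p) := by
          rw [← two_mul, ← mul_assoc, mul_comm (ENNReal.ofReal 2⁻¹) 2, hhalf2, one_mul]
  have hAGp_fin : AG ^ (1/p) ≠ ⊤ := (ENNReal.rpow_lt_top_of_nonneg h1p hAGfin).ne
  have hAHfin : AH ≠ ⊤ := by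
    intro htop
    have h2 : AH ^ (1/p) < ⊤ := lt_of_le_of_lt hE2
      (ENNReal.add_lt_top.mpr ⟨hAGp_fin.lt_top, hAGp_fin.lt_top⟩)
    rw [htop, ENNReal.top_rpow_of_pos (by positivity)] at h2
    exact lt_irrefl _ h2
  have hAFfin : AF ≠ ⊤ := by
    rw [hE1]
    exact (ENNReal.mul_lt_top ENNReal.ofReal_lt_top hAHfin.lt_top).ne
  have hAFp_fin : AF ^ (1/p) ≠ ⊤ := (ENNReal.rpow_lt_top_of_nonneg h1p hAFfin).ne
  have hlower : AG ^ (1/p) ≤ 2 * AF ^ (1/p) := by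
    calc AG ^ (1/p) ≤ AH ^ (1/p) := ENNReal.rpow_le_rpow hE3 h1p
      _ = 2 * AF ^ (1/p) := by rw [h1, ← mul_assoc, hhalf2, one_mul]
  constructor
  · -- lower bound
    rw [hLHS, hRHS, hFrepr, hGrepr, ENNReal.toReal_rpow, ENNReal.toReal_rpow]
    have h5 := ENNReal.toReal_mono
      (by
        refine (ENNReal.mul_lt_top ?_ hAFp_fin.lt_top).ne
        norm_num) hlower
    rw [ENNReal.toReal_mul] at h5
    have h6 : ((2:ℝ≥0∞)).toReal = 2 := by norm_num
    rw [h6] at h5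
    linarith
  · -- upper bound
    rw [hLHS, hRHS, hFrepr, hGrepr, ENNReal.toReal_rpow, ENNReal.toReal_rpow]
    exact ENNReal.toReal_mono hAGp_fin hupper
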